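/- With the generalized Kähler linear algebra as above, write infinitesimal deformations of J₁, J₂ as ε₁ ∈ ∧²L₁*, ε₂ ∈ ∧²L₂*, decomposed as ε₁ = (ε₁⁽¹⁾, ε₁⁽²⁾, ε₁⁽³⁾) under ∧²L₁* = ∧²(L₁⁺)* ⊕ ((L₁⁺)*⊗(L₁⁻)*) ⊕ ∧²(L₁⁻)*, and similarly ε₂ with conj(L₁⁻) in place of L₁⁻. Then the first-order condition [J₁'(t), J₂'(t)] = 0 at t = 0, where Jᵢ'(t) = Jᵢ + t(2i εᵢ - 2i conj(εᵢ)) + O(t²), is equivalent to ε₂⁽¹⁾ = ε₁⁽¹⁾ and ε₂⁽³⁾ = conj(ε₁⁽³⁾). -/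
import Mathlib


/-- First-order deformations of a generalized Kähler pair.  Let `W = V ⊗ ℂ` be the
complexification of a quadratic vector space carrying a generalized Kähler pair
`(J₁, J₂)`, with simultaneous eigenspace decomposition
`W = L₁⁺ ⊕ L₁⁻ ⊕ conj(L₁⁺) ⊕ conj(L₁⁻)` (denoted `Lp, Lm, Lpc, Lmc`, with
projections `Pp, Pm, Ppc, Pmc` and conjugation `c`).  Infinitesimal deformations
`ε₁ : L₁ → L̄₁` and `ε₂ : L₂ → L̄₂` (extended by zero) deform `Jᵢ` to
`Jᵢ'(t) = Jᵢ + t(2i εᵢ - 2i conj(εᵢ)) + O(t²)`.  Then the first-order condition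
`[J₁'(t), J₂'(t)] = 0` at `t = 0` is equivalent to `ε₂⁽¹⁾ = ε₁⁽¹⁾` (the
`∧²(L₁⁺)^*` components agree) and `ε₂⁽³⁾ = conj(ε₁⁽³⁾)` (the `∧²`-components on
`L₁⁻` are conjugate). -/
theorem stmt_19 {W : Type*} [AddCommGroup W] [Module ℂ W]
    [Module ℝ W] [IsScalarTower ℝ ℂ W] [SMulCommClass ℝ ℂ W]
    (J₁ J₂ : W →ₗ[ℂ] W)
    (hJ₁2 : ∀ w, J₁ (J₁ w) = -w) (hJ₂2 : ∀ w, J₂ (J₂ w) = -w)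
    (hJcomm : ∀ w, J₁ (J₂ w) = J₂ (J₁ w))
    (Lp Lm Lpc Lmc : Submodule ℂ W)
    (hLp : ∀ w ∈ Lp, J₁ w = Complex.I • w ∧ J₂ w = Complex.I • w)
    (hLm : ∀ w ∈ Lm, J₁ w = Complex.I • w ∧ J₂ w = -(Complex.I • w))
    (hLpc : ∀ w ∈ Lpc, J₁ w = -(Complex.I • w) ∧ J₂ w = -(Complex.I • w))
    (hLmc : ∀ w ∈ Lmc, J₁ w = -(Complex.I • w) ∧ J₂ w = Complex.I • w)
    (hindep : iSupIndep ![Lp, Lm, Lpc, Lmc])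
    (Pp Pm Ppc Pmc : W →ₗ[ℂ] W)
    (hP_sum : ∀ w, Pp w + Pm w + Ppc w + Pmc w = w)
    (hPp_mem : ∀ w, Pp w ∈ Lp) (hPm_mem : ∀ w, Pm w ∈ Lm)
    (hPpc_mem : ∀ w, Ppc w ∈ Lpc) (hPmc_mem : ∀ w, Pmc w ∈ Lmc)
    (hPp_id : ∀ w ∈ Lp, Pp w = w) (hPm_id : ∀ w ∈ Lm, Pm w = w)
    (hPpc_id : ∀ w ∈ Lpc, Ppc w = w) (hPmc_id : ∀ w ∈ Lmc, Pmc w = w)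
    (hPp_ann : ∀ w, (w ∈ Lm ∨ w ∈ Lpc ∨ w ∈ Lmc) → Pp w = 0)
    (hPm_ann : ∀ w, (w ∈ Lp ∨ w ∈ Lpc ∨ w ∈ Lmc) → Pm w = 0)
    (hPpc_ann : ∀ w, (w ∈ Lp ∨ w ∈ Lm ∨ w ∈ Lmc) → Ppc w = 0)
    (hPmc_ann : ∀ w, (w ∈ Lp ∨ w ∈ Lm ∨ w ∈ Lpc) → Pmc w = 0)
    -- the real structure (conjugation) exchanging the eigenspaces
    (c : W →ₗ[ℝ] W)
    (hc_invol : ∀ w, c (c w) = w)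
    (hc_antilin : ∀ w, c (Complex.I • w) = -(Complex.I • c w))
    (hc_Lp : ∀ w ∈ Lp, c w ∈ Lpc) (hc_Lpc : ∀ w ∈ Lpc, c w ∈ Lp)
    (hc_Lm : ∀ w ∈ Lm, c w ∈ Lmc) (hc_Lmc : ∀ w ∈ Lmc, c w ∈ Lm)
    -- the deformations ε₁ ∈ ∧²L₁^*, ε₂ ∈ ∧²L₂^*, extended by zero
    (ε₁ ε₂ : W →ₗ[ℂ] W)
    (hε₁_ran : ∀ w, ε₁ w ∈ Lpc ⊔ Lmc)
    (hε₁_van : ∀ w, (w ∈ Lpc ∨ w ∈ Lmc) → ε₁ w = 0)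
    (hε₂_ran : ∀ w, ε₂ w ∈ Lpc ⊔ Lm)
    (hε₂_van : ∀ w, (w ∈ Lpc ∨ w ∈ Lm) → ε₂ w = 0) :
    -- the first-order terms Aᵢ = 2i εᵢ - 2i conj(εᵢ), as real-linear endomorphisms
    let A₁ : W →ₗ[ℝ] W :=
      ((2 * Complex.I) • (ε₁.restrictScalars ℝ))
        - ((2 * Complex.I) • (c ∘ₗ (ε₁.restrictScalars ℝ) ∘ₗ c))
    let A₂ : W →ₗ[ℝ] W :=
      ((2 * Complex.I) • (ε₂.restrictScalars ℝ))
        - ((2 * Complex.I) • (c ∘ₗ (ε₂.restrictScalars ℝ) ∘ₗ c))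
    -- [J₁, A₂] + [A₁, J₂] = 0  ↔  ε₂⁽¹⁾ = ε₁⁽¹⁾ and ε₂⁽³⁾ = conj(ε₁⁽³⁾)
    ((J₁.restrictScalars ℝ ∘ₗ A₂ - A₂ ∘ₗ J₁.restrictScalars ℝ)
      + (A₁ ∘ₗ J₂.restrictScalars ℝ - J₂.restrictScalars ℝ ∘ₗ A₁) = 0)
    ↔ ((∀ w ∈ Lp, Ppc (ε₂ w) = Ppc (ε₁ w)) ∧
       (∀ w ∈ Lmc, Pm (ε₂ w) = c (Pmc (ε₁ (c w))))) := by
  intro A₁ A₂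
  have hA₁ : ∀ v, A₁ v = (2 * Complex.I) • ε₁ v - (2 * Complex.I) • c (ε₁ (c v)) := fun v => rfl
  have hA₂ : ∀ v, A₂ v = (2 * Complex.I) • ε₂ v - (2 * Complex.I) • c (ε₂ (c v)) := fun v => rfl
  have hK : ∀ v, ((J₁.restrictScalars ℝ ∘ₗ A₂ - A₂ ∘ₗ J₁.restrictScalars ℝ)
      + (A₁ ∘ₗ J₂.restrictScalars ℝ - J₂.restrictScalars ℝ ∘ₗ A₁)) v
      = J₁ (A₂ v) - A₂ (J₁ v) + (A₁ (J₂ v) - J₂ (A₁ v)) := fun v => rfl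
  -- eigen-decompositions of the images of ε₁, ε₂
  have hε₂d : ∀ v, Pp (ε₂ v) = 0 ∧ Pmc (ε₂ v) = 0 ∧ Ppc (ε₂ v) + Pm (ε₂ v) = ε₂ v := by
    intro v
    obtain ⟨a, ha, b, hb, hab⟩ := Submodule.mem_sup.mp (hε₂_ran v)
    rw [← hab]
    refine ⟨?_, ?_, ?_⟩ <;>
      simp [map_add, hPp_ann a (Or.inr (Or.inl ha)), hPp_ann b (Or.inl hb),
        hPmc_ann a (Or.inr (Or.inr ha)), hPmc_ann b (Or.inr (Or.inl hb)),
        hPpc_id a ha, hPpc_ann b (Or.inr (Or.inl hb)),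
        hPm_id b hb, hPm_ann a (Or.inr (Or.inl ha))]
  have hε₁d : ∀ v, Pp (ε₁ v) = 0 ∧ Pm (ε₁ v) = 0 ∧ Ppc (ε₁ v) + Pmc (ε₁ v) = ε₁ v := by
    intro v
    obtain ⟨a, ha, b, hb, hab⟩ := Submodule.mem_sup.mp (hε₁_ran v)
    rw [← hab]
    refine ⟨?_, ?_, ?_⟩ <;>
      simp [map_add, hPp_ann a (Or.inr (Or.inl ha)), hPp_ann b (Or.inr (Or.inr hb)),
        hPm_ann a (Or.inr (Or.inl ha)), hPm_ann b (Or.inr (Or.inr hb)),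
        hPpc_id a ha, hPpc_ann b (Or.inr (Or.inr hb)),
        hPmc_id b hb, hPmc_ann a (Or.inr (Or.inr ha))]
  have hcε₂d : ∀ v, Pp (c (ε₂ v)) = c (Ppc (ε₂ v)) ∧ Pmc (c (ε₂ v)) = c (Pm (ε₂ v))
      ∧ Pm (c (ε₂ v)) = 0 ∧ Ppc (c (ε₂ v)) = 0
      ∧ Pp (c (ε₂ v)) + Pmc (c (ε₂ v)) = c (ε₂ v) := by
    intro v
    obtain ⟨a, ha, b, hb, hab⟩ := Submodule.mem_sup.mp (hε₂_ran v)
    have hca := hc_Lpc a ha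
    have hcb := hc_Lm b hb
    rw [← hab]
    refine ⟨?_, ?_, ?_, ?_, ?_⟩ <;>
      simp [map_add, hPp_id _ hca, hPp_ann _ (Or.inr (Or.inr hcb)),
        hPmc_id _ hcb, hPmc_ann _ (Or.inl hca),
        hPpc_id a ha, hPpc_ann b (Or.inr (Or.inl hb)),
        hPm_id b hb, hPm_ann a (Or.inr (Or.inl ha)),
        hPm_ann _ (Or.inl hca), hPm_ann _ (Or.inr (Or.inr hcb)),
        hPpc_ann _ (Or.inl hca), hPpc_ann _ (Or.inr (Or.inr hcb))]
  have hcε₁d : ∀ v, Pp (c (ε₁ v)) = c (Ppc (ε₁ v)) ∧ Pm (c (ε₁ v)) = c (Pmc (ε₁ v))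
      ∧ Ppc (c (ε₁ v)) = 0 ∧ Pmc (c (ε₁ v)) = 0
      ∧ Pp (c (ε₁ v)) + Pm (c (ε₁ v)) = c (ε₁ v) := by
    intro v
    obtain ⟨a, ha, b, hb, hab⟩ := Submodule.mem_sup.mp (hε₁_ran v)
    have hca := hc_Lpc a ha
    have hcb := hc_Lmc b hb
    rw [← hab]
    refine ⟨?_, ?_, ?_, ?_, ?_⟩ <;>
      simp [map_add, hPp_id _ hca, hPp_ann _ (Or.inl hcb),
        hPm_id _ hcb, hPm_ann _ (Or.inl hca),
        hPpc_id a ha, hPpc_ann b (Or.inr (Or.inr hb)),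
        hPmc_id b hb, hPmc_ann a (Or.inr (Or.inr ha)),
        hPpc_ann _ (Or.inl hca), hPpc_ann _ (Or.inr (Or.inl hcb)),
        hPmc_ann _ (Or.inl hca), hPmc_ann _ (Or.inr (Or.inl hcb))]
  -- J₁, J₂ through the projections
  have hJ₁f : ∀ v, J₁ v = Complex.I • Pp v + Complex.I • Pm v
      - Complex.I • Ppc v - Complex.I • Pmc v := by
    intro v
    conv_lhs => rw [← hP_sum v]
    rw [map_add, map_add, map_add, (hLp _ (hPp_mem v)).1, (hLm _ (hPm_mem v)).1,
      (hLpc _ (hPpc_mem v)).1, (hLmc _ (hPmc_mem v)).1]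
    abel
  have hJ₂f : ∀ v, J₂ v = Complex.I • Pp v - Complex.I • Pm v
      - Complex.I • Ppc v + Complex.I • Pmc v := by
    intro v
    conv_lhs => rw [← hP_sum v]
    rw [map_add, map_add, map_add, (hLp _ (hPp_mem v)).2, (hLm _ (hPm_mem v)).2,
      (hLpc _ (hPpc_mem v)).2, (hLmc _ (hPmc_mem v)).2]
    abel
  -- the four key pointwise computations
  have keyLp : ∀ w ∈ Lp, J₁ (A₂ w) - A₂ (J₁ w) + (A₁ (J₂ w) - J₂ (A₁ w))
      = (4 : ℂ) • (Ppc (ε₂ w) - Ppc (ε₁ w)) := by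
    intro w hw
    obtain ⟨h1, h2⟩ := hLp w hw
    have he2 : ε₂ (c w) = 0 := hε₂_van _ (Or.inl (hc_Lp w hw))
    have he1 : ε₁ (c w) = 0 := hε₁_van _ (Or.inl (hc_Lp w hw))
    simp only [hA₁, hA₂, h1, h2, hc_antilin, map_neg, map_smul, he1, he2, smul_zero,
      neg_zero, map_zero, sub_zero]
    rw [hJ₁f (ε₂ w), hJ₂f (ε₁ w), (hε₂d w).1, (hε₂d w).2.1, (hε₁d w).1, (hε₁d w).2.1]
    have h2s := (hε₂d w).2.2
    have h1s := (hε₁d w).2.2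
    set a2 := Ppc (ε₂ w); set b2 := Pm (ε₂ w); set a1 := Ppc (ε₁ w); set b1 := Pmc (ε₁ w)
    rw [← h2s, ← h1s]
    simp only [smul_add, smul_sub, smul_neg, neg_smul, smul_smul, mul_assoc,
      Complex.I_mul_I, mul_neg, mul_one, neg_neg, smul_zero, sub_zero, zero_sub, map_zero]
    module
  have keyLmc : ∀ w ∈ Lmc, J₁ (A₂ w) - A₂ (J₁ w) + (A₁ (J₂ w) - J₂ (A₁ w))
      = (-4 : ℂ) • (Pm (ε₂ w) - c (Pmc (ε₁ (c w)))) := by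
    intro w hw
    obtain ⟨h1, h2⟩ := hLmc w hw
    have he2 : ε₂ (c w) = 0 := hε₂_van _ (Or.inr (hc_Lmc w hw))
    have he1 : ε₁ w = 0 := hε₁_van _ (Or.inr hw)
    simp only [hA₁, hA₂, h1, h2, map_neg, hc_antilin, neg_neg, map_smul, he1, he2,
      smul_zero, neg_zero, map_zero, sub_zero, zero_sub, smul_neg]
    rw [hJ₁f (ε₂ w), hJ₂f (c (ε₁ (c w))), (hε₂d w).1, (hε₂d w).2.1,
      (hcε₁d (c w)).1, (hcε₁d (c w)).2.1, (hcε₁d (c w)).2.2.1, (hcε₁d (c w)).2.2.2.1]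
    have h2s := (hε₂d w).2.2
    have h1s := (hcε₁d (c w)).2.2.2.2
    rw [(hcε₁d (c w)).1, (hcε₁d (c w)).2.1] at h1s
    set a2 := Ppc (ε₂ w); set b2 := Pm (ε₂ w)
    set p1 := c (Ppc (ε₁ (c w))); set r1 := c (Pmc (ε₁ (c w)))
    rw [← h2s, ← h1s]
    simp only [smul_add, smul_sub, smul_neg, neg_smul, smul_smul, mul_assoc,
      Complex.I_mul_I, mul_neg, mul_one, neg_neg, smul_zero, sub_zero, zero_sub, map_zero]
    module
  have keyLm : ∀ w ∈ Lm, J₁ (A₂ w) - A₂ (J₁ w) + (A₁ (J₂ w) - J₂ (A₁ w))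
      = (-4 : ℂ) • (c (Pm (ε₂ (c w))) - Pmc (ε₁ w)) := by
    intro w hw
    obtain ⟨h1, h2⟩ := hLm w hw
    have he2 : ε₂ w = 0 := hε₂_van _ (Or.inr hw)
    have he1 : ε₁ (c w) = 0 := hε₁_van _ (Or.inr (hc_Lm w hw))
    simp only [hA₁, hA₂, h1, h2, map_neg, hc_antilin, neg_neg, map_smul, he1, he2,
      smul_zero, neg_zero, map_zero, sub_zero, zero_sub, smul_neg]
    rw [hJ₁f (c (ε₂ (c w))), hJ₂f (ε₁ w), (hε₁d w).1, (hε₁d w).2.1,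
      (hcε₂d (c w)).1, (hcε₂d (c w)).2.1, (hcε₂d (c w)).2.2.1, (hcε₂d (c w)).2.2.2.1]
    have h2s := (hcε₂d (c w)).2.2.2.2
    rw [(hcε₂d (c w)).1, (hcε₂d (c w)).2.1] at h2s
    have h1s := (hε₁d w).2.2
    set p2 := c (Ppc (ε₂ (c w))); set q2 := c (Pm (ε₂ (c w)))
    set a1 := Ppc (ε₁ w); set b1 := Pmc (ε₁ w)
    rw [← h2s, ← h1s]
    simp only [smul_add, smul_sub, smul_neg, neg_smul, smul_smul, mul_assoc,
      Complex.I_mul_I, mul_neg, mul_one, neg_neg, smul_zero, sub_zero, zero_sub, map_zero]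
    module
  have keyLpc : ∀ w ∈ Lpc, J₁ (A₂ w) - A₂ (J₁ w) + (A₁ (J₂ w) - J₂ (A₁ w))
      = (4 : ℂ) • (c (Ppc (ε₂ (c w))) - c (Ppc (ε₁ (c w)))) := by
    intro w hw
    obtain ⟨h1, h2⟩ := hLpc w hw
    have he2 : ε₂ w = 0 := hε₂_van _ (Or.inl hw)
    have he1 : ε₁ w = 0 := hε₁_van _ (Or.inl hw)
    simp only [hA₁, hA₂, h1, h2, map_neg, hc_antilin, neg_neg, map_smul, he1, he2,
      smul_zero, neg_zero, map_zero, sub_zero, zero_sub, smul_neg]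
    rw [hJ₁f (c (ε₂ (c w))), hJ₂f (c (ε₁ (c w))),
      (hcε₂d (c w)).1, (hcε₂d (c w)).2.1, (hcε₂d (c w)).2.2.1, (hcε₂d (c w)).2.2.2.1,
      (hcε₁d (c w)).1, (hcε₁d (c w)).2.1, (hcε₁d (c w)).2.2.1, (hcε₁d (c w)).2.2.2.1]
    have h2s := (hcε₂d (c w)).2.2.2.2
    rw [(hcε₂d (c w)).1, (hcε₂d (c w)).2.1] at h2s
    have h1s := (hcε₁d (c w)).2.2.2.2
    rw [(hcε₁d (c w)).1, (hcε₁d (c w)).2.1] at h1s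
    set p2 := c (Ppc (ε₂ (c w))); set q2 := c (Pm (ε₂ (c w)))
    set p1 := c (Ppc (ε₁ (c w))); set r1 := c (Pmc (ε₁ (c w)))
    rw [← h2s, ← h1s]
    simp only [smul_add, smul_sub, smul_neg, neg_smul, smul_smul, mul_assoc,
      Complex.I_mul_I, mul_neg, mul_one, neg_neg, smul_zero, sub_zero, zero_sub, map_zero]
    module
  rw [LinearMap.ext_iff]
  constructor
  · intro h
    constructor
    · intro w hw
      have hh := h w
      rw [hK w, keyLp w hw, LinearMap.zero_apply] at hh
      have := (smul_eq_zero.mp hh).resolve_left (by norm_num)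
      exact sub_eq_zero.mp this
    · intro w hw
      have hh := h w
      rw [hK w, keyLmc w hw, LinearMap.zero_apply] at hh
      have := (smul_eq_zero.mp hh).resolve_left (by norm_num)
      exact sub_eq_zero.mp this
  · rintro ⟨h1, h2⟩ x
    rw [LinearMap.zero_apply]
    set K := (J₁.restrictScalars ℝ ∘ₗ A₂ - A₂ ∘ₗ J₁.restrictScalars ℝ)
      + (A₁ ∘ₗ J₂.restrictScalars ℝ - J₂.restrictScalars ℝ ∘ₗ A₁) with hKdef
    have hsplit : K x = K (Pp x) + K (Pm x) + K (Ppc x) + K (Pmc x) := by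
      conv_lhs => rw [← hP_sum x]
      simp [map_add]
    rw [hsplit, hK, hK, hK, hK, keyLp _ (hPp_mem x), keyLm _ (hPm_mem x),
      keyLpc _ (hPpc_mem x), keyLmc _ (hPmc_mem x)]
    have e1 : Ppc (ε₂ (Pp x)) - Ppc (ε₁ (Pp x)) = 0 :=
      sub_eq_zero.mpr (h1 _ (hPp_mem x))
    have e4 : Pm (ε₂ (Pmc x)) - c (Pmc (ε₁ (c (Pmc x)))) = 0 :=
      sub_eq_zero.mpr (h2 _ (hPmc_mem x))
    have e2 : c (Pm (ε₂ (c (Pm x)))) - Pmc (ε₁ (Pm x)) = 0 := by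
      have := h2 _ (hc_Lm _ (hPm_mem x))
      rw [hc_invol] at this
      rw [this, hc_invol, sub_self]
    have e3 : c (Ppc (ε₂ (c (Ppc x)))) - c (Ppc (ε₁ (c (Ppc x)))) = 0 := by
      rw [h1 _ (hc_Lpc _ (hPpc_mem x)), sub_self]
    rw [e1, e2, e3, e4]
    simp
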